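/- Let B be a graph in 𝓑_1 with root vertex v_1 (of degree 1 in B), let w_2 be a vertex of degree 2 in B different from v_1, and let T be the graph obtained from B by adding a new vertex v_2 together with the two edges v_1 v_2 and v_2 w_2. Then i(T) = i(B). -/

import Mathlib

namespace PaperIndepDom

open SimpleGraph

/-- The degree of a vertex `v` in a graph `G`. -/
noncomputable def deg {V : Type*} (G : SimpleGraph V) (v : V) : ℕ :=
  (G.neighborSet v).ncard

/-- A set `S` is an independent dominating set of `G`. -/
def IsIDSet {V : Type*} (G : SimpleGraph V) (S : Set V) : Prop :=
  (∀ u ∈ S, ∀ v ∈ S, ¬ G.Adj u v) ∧ ∀ v, v ∉ S → ∃ u ∈ S, G.Adj u v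

/-- The independent domination number `i(G)`. -/
noncomputable def iNum {V : Type*} (G : SimpleGraph V) : ℕ :=
  sInf {n | ∃ S : Set V, IsIDSet G S ∧ S.ncard = n}

/-- The base graph `B₁`: a copy of `K_{2,3}` (vertices `0, 1` forming the partite set of
size 2, vertices `2, 3, 4` forming the partite set of size 3) together with a new root
vertex `5` joined to the degree-2 vertex `2`. -/
def baseGraph : SimpleGraph (Fin 6) :=
  SimpleGraph.fromRel (fun i j =>
    (i.val ≤ 1 ∧ 2 ≤ j.val ∧ j.val ≤ 4) ∨ (i = 2 ∧ j = 5))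

/-- The graph obtained from `G` by adding a vertex-disjoint copy of `K_{2,3}`
(on the vertex set `Fin 2 ⊕ Fin 3`) together with an edge joining the vertex `v'` of `G`
to the degree-2 vertex `Sum.inr t` of the added copy of `K_{2,3}` (operation `O₁`). -/
def addK23 {V : Type*} (G : SimpleGraph V) (v' : V) (t : Fin 3) :
    SimpleGraph (V ⊕ (Fin 2 ⊕ Fin 3)) :=
  SimpleGraph.fromRel (fun x y =>
    (∃ a b, G.Adj a b ∧ x = Sum.inl a ∧ y = Sum.inl b) ∨
    (∃ i j, x = Sum.inr (Sum.inl i) ∧ y = Sum.inr (Sum.inr j)) ∨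
    (x = Sum.inl v' ∧ y = Sum.inr (Sum.inr t)))

/-- `FamilyBRoot G r` means that `G` belongs to the family `𝓑` (the smallest family of
graphs, closed under isomorphism, containing the base graph and closed under the
operation `O₁`) and `r` is the root of `G`. -/
inductive FamilyBRoot : ∀ {V : Type}, SimpleGraph V → V → Prop
  | base : FamilyBRoot baseGraph 5
  | extend {V : Type} {G : SimpleGraph V} {r : V} (hG : FamilyBRoot G r) (v' : V)
      (hv' : deg G v' ≤ 2) (t : Fin 3) : FamilyBRoot (addK23 G v' t) (Sum.inl r)
  | iso {V W : Type} {G : SimpleGraph V} {H : SimpleGraph W} {r : V}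
      (e : G ≃g H) (hG : FamilyBRoot G r) : FamilyBRoot H (e r)

/-- The graph obtained from `B` by adding a new vertex `v₂` (namely `Sum.inr ()`)
together with the two edges `v₁v₂` and `v₂w₂`. -/
def addLink {V : Type*} (B : SimpleGraph V) (v1 w2 : V) : SimpleGraph (V ⊕ Unit) :=
  SimpleGraph.fromRel (fun x y =>
    (∃ a b, B.Adj a b ∧ x = Sum.inl a ∧ y = Sum.inl b) ∨
    (x = Sum.inl v1 ∧ y = Sum.inr ()) ∨
    (x = Sum.inl w2 ∧ y = Sum.inr ()))

variable {V : Type*} {G : SimpleGraph V}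

lemma iNum_le {S : Set V} (h : IsIDSet G S) : iNum G ≤ S.ncard :=
  Nat.sInf_le ⟨S, h, rfl⟩

lemma exists_isIDSet (G : SimpleGraph V) [Finite V] : ∃ S : Set V, IsIDSet G S := by
  classical
  cases nonempty_fintype V
  -- take a maximum-cardinality independent Finset
  have hne : ((Finset.univ : Finset (Finset V)).filter
      (fun s => ∀ u ∈ s, ∀ v ∈ s, ¬ G.Adj u v)).Nonempty := by
    refine ⟨∅, ?_⟩
    simp
  obtain ⟨F, hFmem, hFmax⟩ := Finset.exists_max_image _ (fun s => s.card) hne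
  simp only [Finset.mem_filter, Finset.mem_univ, true_and] at hFmem hFmax
  refine ⟨(F : Set V), ?_, ?_⟩
  · intro u hu v hv
    exact hFmem u (by simpa using hu) v (by simpa using hv)
  · intro v hv
    simp only [Finset.mem_coe] at hv ⊢
    by_contra hno
    push_neg at hno
    have hins : ∀ u ∈ insert v F, ∀ w ∈ insert v F, ¬ G.Adj u w := by
      intro u hu w hw h
      rcases Finset.mem_insert.1 hu with hu1 | hu2 <;>
        rcases Finset.mem_insert.1 hw with hw1 | hw2
      · exact h.ne (hu1.trans hw1.symm)
      · exact hno w hw2 (hu1 ▸ h).symm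
      · exact hno u hu2 (hw1 ▸ h)
      · exact hFmem u hu2 w hw2 h
    have := hFmax _ hins
    have hcard : (insert v F).card = F.card + 1 := Finset.card_insert_of_notMem hv
    omega

lemma iNum_spec (G : SimpleGraph V) [Finite V] :
    ∃ S : Set V, IsIDSet G S ∧ S.ncard = iNum G := by
  obtain ⟨S, hS⟩ := exists_isIDSet G
  have : ({n | ∃ S : Set V, IsIDSet G S ∧ S.ncard = n}).Nonempty := ⟨S.ncard, S, hS, rfl⟩
  obtain ⟨S', hS', hcard⟩ := Nat.sInf_mem this
  exact ⟨S', hS', hcard⟩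

lemma iNum_eq_iff [Finite V] {n : ℕ}
    (hub : ∃ S : Set V, IsIDSet G S ∧ S.ncard = n)
    (hlb : ∀ S : Set V, IsIDSet G S → n ≤ S.ncard) : iNum G = n := by
  obtain ⟨S, hS, hc⟩ := hub
  obtain ⟨S', hS', hc'⟩ := iNum_spec G
  have h1 : iNum G ≤ n := hc ▸ iNum_le hS
  have h2 : n ≤ iNum G := hc' ▸ hlb S' hS'
  omega




section CharLemmas

variable {V : Type*} {G B : SimpleGraph V} {v' v1 w2 : V} {t : Fin 3}

@[simp] lemma addK23_adj_inl_inl {a b : V} :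
    (addK23 G v' t).Adj (Sum.inl a) (Sum.inl b) ↔ G.Adj a b := by
  rw [addK23, SimpleGraph.fromRel_adj]
  constructor
  · rintro ⟨hne, h⟩
    rcases h with (⟨a', b', hab, ha, hb⟩ | ⟨i, j, hi, hj⟩ | ⟨h1, h2⟩) |
      (⟨a', b', hab, ha, hb⟩ | ⟨i, j, hi, hj⟩ | ⟨h1, h2⟩)
    · rw [Sum.inl.inj ha, Sum.inl.inj hb]; exact hab
    · exact absurd hi (by simp)
    · exact absurd h2 (by simp)
    · rw [Sum.inl.inj ha, Sum.inl.inj hb]; exact hab.symm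
    · exact absurd hi (by simp)
    · exact absurd h2 (by simp)
  · intro h
    exact ⟨by simpa using h.ne, Or.inl (Or.inl ⟨a, b, h, rfl, rfl⟩)⟩

@[simp] lemma addK23_adj_inl_inr {a : V} {z : Fin 2 ⊕ Fin 3} :
    (addK23 G v' t).Adj (Sum.inl a) (Sum.inr z) ↔ a = v' ∧ z = Sum.inr t := by
  simp only [addK23, SimpleGraph.fromRel_adj, ne_eq, Sum.inl.injEq, Sum.inr.injEq,
    reduceCtorEq]
  aesop

@[simp] lemma addK23_adj_inr_inl {a : V} {z : Fin 2 ⊕ Fin 3} :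
    (addK23 G v' t).Adj (Sum.inr z) (Sum.inl a) ↔ a = v' ∧ z = Sum.inr t := by
  rw [SimpleGraph.adj_comm]; exact addK23_adj_inl_inr

@[simp] lemma addK23_adj_inr_inr {z z' : Fin 2 ⊕ Fin 3} :
    (addK23 G v' t).Adj (Sum.inr z) (Sum.inr z') ↔
      ((∃ i j, z = Sum.inl i ∧ z' = Sum.inr j) ∨ (∃ i j, z' = Sum.inl i ∧ z = Sum.inr j)) := by
  simp only [addK23, SimpleGraph.fromRel_adj, ne_eq, Sum.inr.injEq, reduceCtorEq]
  aesop

@[simp] lemma addK23_adj_II {i i' : Fin 2} :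
    ¬ (addK23 G v' t).Adj (Sum.inr (Sum.inl i)) (Sum.inr (Sum.inl i')) := by simp

@[simp] lemma addK23_adj_IR {i : Fin 2} {j : Fin 3} :
    (addK23 G v' t).Adj (Sum.inr (Sum.inl i)) (Sum.inr (Sum.inr j)) := by
  simp

@[simp] lemma addK23_adj_RR {j j' : Fin 3} :
    ¬ (addK23 G v' t).Adj (Sum.inr (Sum.inr j)) (Sum.inr (Sum.inr j')) := by simp

@[simp] lemma addLink_adj_inl_inl {a b : V} :
    (addLink B v1 w2).Adj (Sum.inl a) (Sum.inl b) ↔ B.Adj a b := by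
  rw [addLink, SimpleGraph.fromRel_adj]
  constructor
  · rintro ⟨hne, h⟩
    rcases h with (⟨a', b', hab, ha, hb⟩ | ⟨h1, h2⟩ | ⟨h1, h2⟩) |
      (⟨a', b', hab, ha, hb⟩ | ⟨h1, h2⟩ | ⟨h1, h2⟩)
    · rw [Sum.inl.inj ha, Sum.inl.inj hb]; exact hab
    · exact absurd h2 (by simp)
    · exact absurd h2 (by simp)
    · rw [Sum.inl.inj ha, Sum.inl.inj hb]; exact hab.symm
    · exact absurd h2 (by simp)
    · exact absurd h2 (by simp)
  · intro h
    exact ⟨by simpa using h.ne, Or.inl (Or.inl ⟨a, b, h, rfl, rfl⟩)⟩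

@[simp] lemma addLink_adj_inl_inr {a : V} {u : Unit} :
    (addLink B v1 w2).Adj (Sum.inl a) (Sum.inr u) ↔ a = v1 ∨ a = w2 := by
  simp only [addLink, SimpleGraph.fromRel_adj, ne_eq, Sum.inl.injEq, reduceCtorEq]
  aesop

@[simp] lemma addLink_adj_inr_inl {a : V} {u : Unit} :
    (addLink B v1 w2).Adj (Sum.inr u) (Sum.inl a) ↔ a = v1 ∨ a = w2 := by
  rw [SimpleGraph.adj_comm]; exact addLink_adj_inl_inr

@[simp] lemma addLink_adj_inr_inr {u u' : Unit} :
    ¬ (addLink B v1 w2).Adj (Sum.inr u) (Sum.inr u') := by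
  simp [addLink, SimpleGraph.fromRel_adj]

end CharLemmas




section Split

lemma ncard_split {α β : Type*} [Finite α] [Finite β] (S : Set (α ⊕ β)) :
    S.ncard = {a | Sum.inl a ∈ S}.ncard + (S ∩ Set.range Sum.inr).ncard := by
  have hd : Disjoint (Sum.inl '' {a | Sum.inl a ∈ S}) (S ∩ Set.range Sum.inr) := by
    rw [Set.disjoint_left]
    rintro x ⟨a, _, rfl⟩ ⟨_, ⟨b, hb⟩⟩
    exact nomatch hb
  have hS : S = (Sum.inl '' {a | Sum.inl a ∈ S}) ∪ (S ∩ Set.range Sum.inr) := by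
    ext x
    cases x with
    | inl a => simp
    | inr b => simp
  calc S.ncard = ((Sum.inl '' {a | Sum.inl a ∈ S}) ∪ (S ∩ Set.range Sum.inr)).ncard := by
        rw [← hS]
    _ = {a | Sum.inl a ∈ S}.ncard + (S ∩ Set.range Sum.inr).ncard := by
        rw [Set.ncard_union_eq hd (Set.toFinite _) (Set.toFinite _),
          Set.ncard_image_of_injective _ Sum.inl_injective]

end Split

section DegLemmas

variable {V : Type*} {G : SimpleGraph V} {v' : V} {t : Fin 3}

lemma neighborSet_addK23_inl_ne {a : V} (h : a ≠ v') :
    (addK23 G v' t).neighborSet (Sum.inl a) = Sum.inl '' G.neighborSet a := by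
  ext x
  cases x with
  | inl b => simp [SimpleGraph.mem_neighborSet]
  | inr z => simp [SimpleGraph.mem_neighborSet, h]

lemma neighborSet_addK23_inl_eq :
    (addK23 G v' t).neighborSet (Sum.inl v') =
      Sum.inl '' G.neighborSet v' ∪ {Sum.inr (Sum.inr t)} := by
  ext x
  cases x with
  | inl b => simp [SimpleGraph.mem_neighborSet]
  | inr z => simp [SimpleGraph.mem_neighborSet, eq_comm]

lemma deg_addK23_inl_ne [Finite V] {a : V} (h : a ≠ v') :
    deg (addK23 G v' t) (Sum.inl a) = deg G a := by
  rw [deg, neighborSet_addK23_inl_ne h,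
    Set.ncard_image_of_injective _ Sum.inl_injective, deg]

lemma deg_addK23_inl_eq [Finite V] :
    deg (addK23 G v' t) (Sum.inl v') = deg G v' + 1 := by
  rw [deg, neighborSet_addK23_inl_eq,
    Set.ncard_union_eq ?_ (Set.toFinite _) (Set.toFinite _),
    Set.ncard_image_of_injective _ Sum.inl_injective, Set.ncard_singleton, deg]
  rw [Set.disjoint_left]
  rintro x ⟨b, _, rfl⟩ hx
  simp at hx

lemma neighborSet_addK23_I (i : Fin 2) :
    (addK23 G v' t).neighborSet (Sum.inr (Sum.inl i)) =
      (fun j => (Sum.inr (Sum.inr j) : V ⊕ (Fin 2 ⊕ Fin 3))) '' Set.univ := by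
  ext x
  cases x with
  | inl b => simp [SimpleGraph.mem_neighborSet, SimpleGraph.adj_comm]
  | inr z =>
    cases z with
    | inl i' => simp
    | inr j => simp [SimpleGraph.mem_neighborSet]

lemma deg_addK23_I (i : Fin 2) : deg (addK23 G v' t) (Sum.inr (Sum.inl i)) = 3 := by
  rw [deg, neighborSet_addK23_I,
    Set.ncard_image_of_injective _ (fun a b h => by simpa using h), Set.ncard_univ]
  simp [Nat.card_eq_fintype_card]

lemma neighborSet_addK23_R_eq :
    (addK23 G v' t).neighborSet (Sum.inr (Sum.inr t)) =
      (fun i => (Sum.inr (Sum.inl i) : V ⊕ (Fin 2 ⊕ Fin 3))) '' Set.univ ∪ {Sum.inl v'} := by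
  ext x
  cases x with
  | inl b => simp [SimpleGraph.mem_neighborSet, eq_comm]
  | inr z =>
    cases z with
    | inl i => simp [SimpleGraph.mem_neighborSet, SimpleGraph.adj_comm]
    | inr j => simp

lemma neighborSet_addK23_R_ne {j : Fin 3} (h : j ≠ t) :
    (addK23 G v' t).neighborSet (Sum.inr (Sum.inr j)) =
      (fun i => (Sum.inr (Sum.inl i) : V ⊕ (Fin 2 ⊕ Fin 3))) '' Set.univ := by
  ext x
  cases x with
  | inl b => simp [SimpleGraph.mem_neighborSet, h]
  | inr z =>
    cases z with
    | inl i => simp [SimpleGraph.mem_neighborSet, SimpleGraph.adj_comm]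
    | inr j' => simp

lemma two_ncard_univ_fin2 :
    ((fun i => (Sum.inr (Sum.inl i) : V ⊕ (Fin 2 ⊕ Fin 3))) '' Set.univ).ncard = 2 := by
  rw [Set.ncard_image_of_injective _ (fun a b h => by simpa using h), Set.ncard_univ]
  simp [Nat.card_eq_fintype_card]

lemma deg_addK23_R_eq [Finite V] :
    deg (addK23 G v' t) (Sum.inr (Sum.inr t)) = 3 := by
  rw [deg, neighborSet_addK23_R_eq,
    Set.ncard_union_eq ?_ (Set.toFinite _) (Set.toFinite _), two_ncard_univ_fin2,
    Set.ncard_singleton]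
  rw [Set.disjoint_left]
  rintro x ⟨b, _, rfl⟩ hx
  simp at hx

lemma deg_addK23_R_ne [Finite V] {j : Fin 3} (h : j ≠ t) :
    deg (addK23 G v' t) (Sum.inr (Sum.inr j)) = 2 := by
  rw [deg, neighborSet_addK23_R_ne h, two_ncard_univ_fin2]

end DegLemmas

section L2

variable {V : Type*} {G : SimpleGraph V} {v' : V} {t : Fin 3}

lemma isIDSet_addK23_of {S : Set V} (h : IsIDSet G S) :
    IsIDSet (addK23 G v' t)
      (Sum.inl '' S ∪ {Sum.inr (Sum.inl 0), Sum.inr (Sum.inl 1)}) := by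
  obtain ⟨hind, hdom⟩ := h
  constructor
  · rintro x hx y hy hadj
    rcases hx with ⟨a, ha, rfl⟩ | hx
    · rcases hy with ⟨b, hb, rfl⟩ | hy
      · exact hind a ha b hb (addK23_adj_inl_inl.1 hadj)
      · rcases hy with rfl | rfl <;> simp at hadj
    · rcases hy with ⟨b, hb, rfl⟩ | hy
      · rcases hx with rfl | rfl <;> simp at hadj
      · rcases hx with rfl | rfl <;> rcases hy with rfl | rfl <;> simp at hadj
  · rintro (a | z) hx
    · have ha : a ∉ S := fun h => hx (Or.inl ⟨a, h, rfl⟩)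
      obtain ⟨b, hb, hab⟩ := hdom a ha
      exact ⟨Sum.inl b, Or.inl ⟨b, hb, rfl⟩, addK23_adj_inl_inl.2 hab⟩
    · cases z with
      | inl i =>
        exfalso
        apply hx
        right
        have : i = 0 ∨ i = 1 := by omega
        rcases this with rfl | rfl
        · exact Set.mem_insert _ _
        · exact Set.mem_insert_of_mem _ rfl
      | inr j =>
        exact ⟨Sum.inr (Sum.inl 0), Or.inr (Set.mem_insert _ _), by simp⟩

lemma ncard_compl_singleton_fin3 (t : Fin 3) : ({t}ᶜ : Set (Fin 3)).ncard = 2 := by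
  have h : ({t}ᶜ : Set (Fin 3)) = Set.univ \ {t} := by
    ext x; simp
  rw [h, Set.ncard_diff (Set.subset_univ _), Set.ncard_univ, Set.ncard_singleton]
  simp [Nat.card_eq_fintype_card]

lemma L2_lb [Finite V] {S : Set (V ⊕ (Fin 2 ⊕ Fin 3))}
    (hS : IsIDSet (addK23 G v' t) S) : iNum G + 2 ≤ S.ncard := by
  obtain ⟨hind, hdom⟩ := hS
  have hsplit := ncard_split S
  set SV : Set V := {a | Sum.inl a ∈ S} with hSVdef
  have hSVind : ∀ a ∈ SV, ∀ b ∈ SV, ¬ G.Adj a b := by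
    intro a ha b hb hab
    exact hind _ ha _ hb (addK23_adj_inl_inl.2 hab)
  by_cases hI : ∃ i, Sum.inr (Sum.inl i) ∈ S
  · -- Case A : both I's in S, no R in S
    obtain ⟨i₀, hi₀⟩ := hI
    have hR : ∀ j, Sum.inr (Sum.inr j) ∉ S := fun j hj =>
      hind _ hi₀ _ hj (by simp)
    have hIall : ∀ i, Sum.inr (Sum.inl i) ∈ S := by
      intro i
      by_contra hni
      obtain ⟨y, hy, hadj⟩ := hdom _ hni
      rcases y with a | z
      · rw [addK23_adj_inl_inr] at hadj
        exact nomatch hadj.2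
      · rcases z with i' | j
        · exact absurd hadj (by simp)
        · exact absurd hy (hR j)
    have hX : S ∩ Set.range Sum.inr =
        {Sum.inr (Sum.inl 0), Sum.inr (Sum.inl 1)} := by
      ext x
      constructor
      · rintro ⟨hxS, z, rfl⟩
        rcases z with i | j
        · have : i = 0 ∨ i = 1 := by omega
          rcases this with rfl | rfl
          · exact Set.mem_insert _ _
          · exact Set.mem_insert_of_mem _ rfl
        · exact absurd hxS (hR j)
      · rintro (rfl | rfl)
        · exact ⟨hIall 0, Sum.inl 0, rfl⟩
        · exact ⟨hIall 1, Sum.inl 1, rfl⟩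
    have hXcard : (S ∩ Set.range Sum.inr).ncard = 2 := by
      rw [hX]; exact Set.ncard_pair (by simp)
    have hSVid : IsIDSet G SV := by
      refine ⟨hSVind, ?_⟩
      intro x hx
      obtain ⟨y, hy, hadj⟩ := hdom (Sum.inl x) hx
      rcases y with b | z
      · exact ⟨b, hy, addK23_adj_inl_inl.1 hadj⟩
      · rw [addK23_adj_inr_inl] at hadj
        obtain ⟨rfl, rfl⟩ := hadj
        exact absurd hy (hR t)
    have := iNum_le hSVid
    omega
  · -- Case B : no I in S
    push_neg at hI
    have hRne : ∀ j, j ≠ t → Sum.inr (Sum.inr j) ∈ S := by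
      intro j hjt
      by_contra hnj
      obtain ⟨y, hy, hadj⟩ := hdom _ hnj
      rcases y with a | z
      · rw [addK23_adj_inl_inr] at hadj
        exact hjt (by simpa using hadj.2)
      · rcases z with i | j'
        · exact absurd hy (hI i)
        · exact absurd hadj (by simp)
    by_cases hRt : Sum.inr (Sum.inr t) ∈ S
    · -- B1 : all three R's in S
      have hRall : ∀ j, Sum.inr (Sum.inr j) ∈ S := by
        intro j
        by_cases hj : j = t
        · exact hj ▸ hRt
        · exact hRne j hj
      have hv'S : Sum.inl v' ∉ S := fun h =>
        hind _ h _ hRt (by simp)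
      have hX : S ∩ Set.range Sum.inr =
          (fun j => (Sum.inr (Sum.inr j) : V ⊕ (Fin 2 ⊕ Fin 3))) '' Set.univ := by
        ext x
        constructor
        · rintro ⟨hxS, z, rfl⟩
          rcases z with i | j
          · exact absurd hxS (hI i)
          · exact ⟨j, trivial, rfl⟩
        · rintro ⟨j, _, rfl⟩
          exact ⟨hRall j, Sum.inr j, rfl⟩
      have hXcard : (S ∩ Set.range Sum.inr).ncard = 3 := by
        rw [hX, Set.ncard_image_of_injective _ (fun a b h => by simpa using h),
          Set.ncard_univ]
        simp [Nat.card_eq_fintype_card]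
      have hSVdom : ∀ x, x ∉ SV → x ≠ v' → ∃ b ∈ SV, G.Adj b x := by
        intro x hx hxv
        obtain ⟨y, hy, hadj⟩ := hdom (Sum.inl x) hx
        rcases y with b | z
        · exact ⟨b, hy, addK23_adj_inl_inl.1 hadj⟩
        · rw [addK23_adj_inr_inl] at hadj
          exact absurd hadj.1 hxv
      by_cases hv'dom : ∃ b ∈ SV, G.Adj b v'
      · have hSVid : IsIDSet G SV := by
          refine ⟨hSVind, ?_⟩
          intro x hx
          by_cases hxv : x = v'
          · subst hxv; exact hv'dom
          · exact hSVdom x hx hxv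
        have := iNum_le hSVid
        omega
      · push_neg at hv'dom
        have hv'SV : v' ∉ SV := hv'S
        have hid : IsIDSet G (insert v' SV) := by
          constructor
          · intro x hx y hy hxy
            rcases Set.mem_insert_iff.1 hx with hx1 | hx2 <;>
              rcases Set.mem_insert_iff.1 hy with hy1 | hy2
            · exact hxy.ne (hx1.trans hy1.symm)
            · rw [hx1] at hxy; exact hv'dom y hy2 hxy.symm
            · rw [hy1] at hxy; exact hv'dom x hx2 hxy
            · exact hSVind x hx2 y hy2 hxy
          · intro x hx
            have hxv : x ≠ v' := fun h => hx (h ▸ Set.mem_insert _ _)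
            have hxSV : x ∉ SV := fun h => hx (Set.mem_insert_of_mem _ h)
            obtain ⟨b, hb, hab⟩ := hSVdom x hxSV hxv
            exact ⟨b, Set.mem_insert_of_mem _ hb, hab⟩
        have hcard : (insert v' SV).ncard = SV.ncard + 1 :=
          Set.ncard_insert_of_notMem hv'SV (Set.toFinite _)
        have := iNum_le hid
        omega
    · -- B2 : v' in S
      have hv'mem : Sum.inl v' ∈ S := by
        obtain ⟨y, hy, hadj⟩ := hdom _ hRt
        rcases y with a | z
        · rw [addK23_adj_inl_inr] at hadj
          exact hadj.1 ▸ hy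
        · rcases z with i | j'
          · exact absurd hy (hI i)
          · exact absurd hadj (by simp)
      have hX : S ∩ Set.range Sum.inr =
          (fun j => (Sum.inr (Sum.inr j) : V ⊕ (Fin 2 ⊕ Fin 3))) '' ({t}ᶜ) := by
        ext x
        constructor
        · rintro ⟨hxS, z, rfl⟩
          rcases z with i | j
          · exact absurd hxS (hI i)
          · refine ⟨j, ?_, rfl⟩
            intro hj
            simp only [Set.mem_singleton_iff] at hj
            exact hRt (hj ▸ hxS)
        · rintro ⟨j, hj, rfl⟩
          exact ⟨hRne j (by simpa using hj), Sum.inr j, rfl⟩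
      have hXcard : (S ∩ Set.range Sum.inr).ncard = 2 := by
        rw [hX, Set.ncard_image_of_injective _ (fun a b h => by simpa using h),
          ncard_compl_singleton_fin3]
      have hSVid : IsIDSet G SV := by
        refine ⟨hSVind, ?_⟩
        intro x hx
        obtain ⟨y, hy, hadj⟩ := hdom (Sum.inl x) hx
        rcases y with b | z
        · exact ⟨b, hy, addK23_adj_inl_inl.1 hadj⟩
        · rw [addK23_adj_inr_inl] at hadj
          exact absurd (hadj.1 ▸ hv'mem : Sum.inl x ∈ S) hx
      have := iNum_le hSVid
      omega

lemma ncard_extSet [Finite V] (S : Set V) :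
    (Sum.inl '' S ∪ {Sum.inr (Sum.inl 0), Sum.inr (Sum.inl 1)} :
      Set (V ⊕ (Fin 2 ⊕ Fin 3))).ncard = S.ncard + 2 := by
  rw [Set.ncard_union_eq ?_ (Set.toFinite _) (Set.toFinite _),
    Set.ncard_image_of_injective _ Sum.inl_injective, Set.ncard_pair (by simp)]
  rw [Set.disjoint_left]
  rintro x ⟨a, _, rfl⟩ hx
  rcases hx with h | h <;> simp at h

lemma iNum_addK23 [Finite V] (G : SimpleGraph V) (v' : V) (t : Fin 3) :
    iNum (addK23 G v' t) = iNum G + 2 := by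
  obtain ⟨S, hS, hcard⟩ := iNum_spec G
  have hup : iNum (addK23 G v' t) ≤ iNum G + 2 := by
    have h2 := isIDSet_addK23_of (v' := v') (t := t) hS
    have hcard2 := ncard_extSet S
    have := iNum_le h2
    omega
  obtain ⟨S', hS', hcard'⟩ := iNum_spec (addK23 G v' t)
  have hlow := L2_lb hS'
  omega

end L2



section IsoTransport

variable {V W : Type*} {G : SimpleGraph V} {H : SimpleGraph W}

lemma isIDSet_image (e : G ≃g H) {S : Set V} (h : IsIDSet G S) :
    IsIDSet H (⇑e '' S) := by
  obtain ⟨hind, hdom⟩ := h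
  constructor
  · rintro x ⟨a, ha, rfl⟩ y ⟨b, hb, rfl⟩ hadj
    exact hind a ha b hb (e.map_adj_iff.1 hadj)
  · intro w hw
    have : e.symm w ∉ S := by
      intro hmem
      exact hw ⟨e.symm w, hmem, by simp⟩
    obtain ⟨u, hu, hadj⟩ := hdom _ this
    refine ⟨e u, ⟨u, hu, rfl⟩, ?_⟩
    have := e.map_adj_iff.2 hadj
    simpa using this

lemma iNum_le_iNum (e : G ≃g H) : iNum H ≤ iNum G := by
  by_cases hne : ∃ S : Set V, IsIDSet G S
  · obtain ⟨S, hS⟩ := hne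
    have : ({n | ∃ S : Set V, IsIDSet G S ∧ S.ncard = n}).Nonempty := ⟨S.ncard, S, hS, rfl⟩
    obtain ⟨S', hS', hcard⟩ := Nat.sInf_mem this
    have h2 : IsIDSet H (⇑e '' S') := isIDSet_image e hS'
    have h3 : (⇑e '' S').ncard = S'.ncard :=
      Set.ncard_image_of_injective _ (EquivLike.injective e)
    have := iNum_le h2
    rw [h3, hcard] at this
    exact this
  · have : {n | ∃ S : Set W, IsIDSet H S ∧ S.ncard = n} = ∅ := by
      ext n
      simp only [Set.mem_setOf_eq, Set.mem_empty_iff_false, iff_false]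
      rintro ⟨S, hS, -⟩
      exact hne ⟨⇑e.symm '' S, isIDSet_image e.symm hS⟩
    rw [iNum, this, Nat.sInf_empty]
    exact Nat.zero_le _

lemma iNum_congr (e : G ≃g H) : iNum G = iNum H :=
  le_antisymm (iNum_le_iNum e.symm) (iNum_le_iNum e)

lemma deg_congr (e : G ≃g H) (v : V) : deg H (e v) = deg G v := by
  rw [deg, deg, ← Nat.card_coe_set_eq, ← Nat.card_coe_set_eq]
  exact Nat.card_congr (e.mapNeighborSet v).symm

end IsoTransport



section Isos

variable {V W : Type*}

/-- Transport `addLink` along an isomorphism. -/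
def addLinkIso {B : SimpleGraph V} {B' : SimpleGraph W} (e : B ≃g B') (v1 w2 : V) :
    addLink B v1 w2 ≃g addLink B' (e v1) (e w2) where
  toEquiv := Equiv.sumCongr e.toEquiv (Equiv.refl Unit)
  map_rel_iff' := by
    rintro (a | u) (b | u') <;>
      simp [EmbeddingLike.apply_eq_iff_eq, e.map_adj_iff]

/-- `addLink` after `addK23` at a vertex of `G` is the same as `addK23` after `addLink`. -/
def linkK23Iso (G : SimpleGraph V) (r w v' : V) (t : Fin 3) :
    addLink (addK23 G v' t) (Sum.inl r) (Sum.inl w) ≃g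
      addK23 (addLink G r w) (Sum.inl v') t where
  toEquiv :=
    { toFun := fun x => match x with
        | .inl (.inl a) => .inl (.inl a)
        | .inl (.inr z) => .inr z
        | .inr _ => .inl (.inr ())
      invFun := fun x => match x with
        | .inl (.inl a) => .inl (.inl a)
        | .inl (.inr _) => .inr ()
        | .inr z => .inl (.inr z)
      left_inv := by rintro ((a | z) | ⟨⟩) <;> rfl
      right_inv := by rintro ((a | ⟨⟩) | z) <;> rfl }
  map_rel_iff' := by
    rintro ((a | z) | ⟨⟩) ((b | z') | ⟨⟩) <;>
      simp [Equiv.coe_fn_mk]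

end Isos

lemma famFinite : ∀ {V : Type} {G : SimpleGraph V} {r : V}, FamilyBRoot G r → Finite V := by
  intro V G r h
  induction h with
  | base => infer_instance
  | extend hG v' hv' t ih => haveI := ih; infer_instance
  | iso e hG ih => exact Finite.of_equiv _ e.toEquiv



section BaseFacts

instance : DecidableRel baseGraph.Adj := fun a b =>
  decidable_of_iff' _ (SimpleGraph.fromRel_adj _ a b)

instance {B : SimpleGraph (Fin 6)} [DecidableRel B.Adj] (v1 w2 : Fin 6) :
    DecidableRel (addLink B v1 w2).Adj := fun a b =>
  decidable_of_iff' _ (SimpleGraph.fromRel_adj _ a b)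

lemma isIDSet_coe {V : Type*} {G : SimpleGraph V} {F : Finset V} :
    IsIDSet G ↑F ↔
      ((∀ u ∈ F, ∀ v ∈ F, ¬ G.Adj u v) ∧ ∀ v, v ∉ F → ∃ u ∈ F, G.Adj u v) := by
  simp [IsIDSet]

lemma lb_bridge {V : Type*} [Finite V] {G : SimpleGraph V} {n : ℕ}
    (h : ∀ F : Finset V,
      ((∀ u ∈ F, ∀ v ∈ F, ¬ G.Adj u v) ∧ ∀ v, v ∉ F → ∃ u ∈ F, G.Adj u v) → n ≤ F.card) :
    ∀ S : Set V, IsIDSet G S → n ≤ S.ncard := by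
  intro S hS
  have hfin : S.Finite := Set.toFinite S
  rw [Set.ncard_eq_toFinset_card S hfin]
  apply h
  constructor
  · intro u hu v hv
    exact hS.1 u (hfin.mem_toFinset.1 hu) v (hfin.mem_toFinset.1 hv)
  · intro v hv
    obtain ⟨u, hu, hadj⟩ := hS.2 v (fun h' => hv (hfin.mem_toFinset.2 h'))
    exact ⟨u, hfin.mem_toFinset.2 hu, hadj⟩

lemma deg_base (x : Fin 6) :
    deg baseGraph x = if x.val ≤ 2 then 3 else if x.val ≤ 4 then 2 else 1 := by
  rw [deg, Set.ncard_eq_toFinset_card']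
  revert x
  decide

lemma iNum_base : iNum baseGraph = 3 := by
  apply iNum_eq_iff
  · refine ⟨(↑({3, 4, 5} : Finset (Fin 6)) : Set (Fin 6)), ?_, ?_⟩
    · rw [isIDSet_coe]; decide
    · rw [Set.ncard_coe_finset]; decide
  · exact lb_bridge (by decide)

lemma base_L1 : ∃ S : Set (Fin 6), IsIDSet baseGraph S ∧ S.ncard = iNum baseGraph ∧
    (5 : Fin 6) ∈ S := by
  refine ⟨(↑({3, 4, 5} : Finset (Fin 6)) : Set (Fin 6)), ?_, ?_, by decide⟩
  · rw [isIDSet_coe]; decide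
  · rw [Set.ncard_coe_finset, iNum_base]; decide

lemma base_adj5 (x : Fin 6) : baseGraph.Adj 5 x ↔ x = 2 := by
  revert x; decide

lemma base_deg2 (p : Fin 6) : deg baseGraph p = 2 ↔ (p = 3 ∨ p = 4) := by
  rw [deg_base]
  fin_cases p <;> simp

set_option maxRecDepth 10000 in
set_option synthInstance.maxSize 2000 in
set_option synthInstance.maxHeartbeats 1000000 in
lemma base_C1_fin : ∀ F : Finset (Fin 6),
    (∀ u ∈ F, ∀ v ∈ F, ¬ baseGraph.Adj u v) → (5 : Fin 6) ∉ F → (2 : Fin 6) ∉ F →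
    (∀ v, v ≠ 5 → v ∉ F → ∃ u ∈ F, baseGraph.Adj u v) → 2 ≤ F.card := by decide

set_option maxRecDepth 10000 in
set_option synthInstance.maxSize 2000 in
set_option synthInstance.maxHeartbeats 1000000 in
lemma base_C2_fin : ∀ F : Finset (Fin 6),
    (∀ u ∈ F, ∀ v ∈ F, ¬ baseGraph.Adj u v) → (5 : Fin 6) ∉ F → (2 : Fin 6) ∉ F →
    (∀ v, v ≠ 5 → v ∉ F → ∃ u ∈ F, baseGraph.Adj u v) →
    (∃ p ∈ F, p = 3 ∨ p = 4) → 3 ≤ F.card := by decide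

set_option maxRecDepth 10000 in
lemma base_addLink3 : iNum (addLink baseGraph 5 3) = 3 := by
  apply iNum_eq_iff
  · refine ⟨(↑({Sum.inl 3, Sum.inl 4, Sum.inl 5} : Finset (Fin 6 ⊕ Unit)) :
      Set (Fin 6 ⊕ Unit)), ?_, ?_⟩
    · rw [isIDSet_coe]; decide
    · rw [Set.ncard_coe_finset]; decide
  · exact lb_bridge (by decide)

set_option maxRecDepth 10000 in
lemma base_addLink4 : iNum (addLink baseGraph 5 4) = 3 := by
  apply iNum_eq_iff
  · refine ⟨(↑({Sum.inl 3, Sum.inl 4, Sum.inl 5} : Finset (Fin 6 ⊕ Unit)) :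
      Set (Fin 6 ⊕ Unit)), ?_, ?_⟩
    · rw [isIDSet_coe]; decide
    · rw [Set.ncard_coe_finset]; decide
  · exact lb_bridge (by decide)

end BaseFacts



def C1prop {V : Type} (G : SimpleGraph V) (r : V) : Prop :=
  ∀ D : Set V, (∀ u ∈ D, ∀ v ∈ D, ¬ G.Adj u v) → r ∉ D → (∀ x, G.Adj r x → x ∉ D) →
    (∀ x, x ≠ r → x ∉ D → ∃ y ∈ D, G.Adj y x) → iNum G ≤ D.ncard + 1

def C2prop {V : Type} (G : SimpleGraph V) (r : V) : Prop :=
  ∀ D : Set V, (∀ u ∈ D, ∀ v ∈ D, ¬ G.Adj u v) → r ∉ D → (∀ x, G.Adj r x → x ∉ D) →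
    (∀ x, x ≠ r → x ∉ D → ∃ y ∈ D, G.Adj y x) → (∃ p ∈ D, deg G p = 2) →
    iNum G ≤ D.ncard

def Mprop {V : Type} (G : SimpleGraph V) (r : V) : Prop :=
  deg G r = 1 → ∀ w2, w2 ≠ r → deg G w2 = 2 → iNum (addLink G r w2) = iNum G

def Inv {V : Type} (G : SimpleGraph V) (r : V) : Prop :=
  (∀ x, x ≠ r → 2 ≤ deg G x) ∧ (∀ x, G.Adj r x → deg G x = 3) ∧ (1 ≤ deg G r) ∧
  (∃ S, IsIDSet G S ∧ S.ncard = iNum G ∧ r ∈ S) ∧ C1prop G r ∧ C2prop G r ∧ Mprop G r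

lemma fin3_third : ∀ (t j : Fin 3), j ≠ t →
    ∃ k, k ≠ t ∧ k ≠ j ∧ ∀ l : Fin 3, l = t ∨ l = j ∨ l = k := by decide

section Extend

variable {V : Type} [Finite V] {G : SimpleGraph V} {r v' : V} {t : Fin 3}

/-- Shared "case B" (no vertex of the small side of the new copy is in `D`) for the
extension step of `C1`/`C2`. -/
lemma extend_caseB (hdeg2v : ∀ x, x ≠ r → 2 ≤ deg G x)
    (hadjdeg : ∀ x, G.Adj r x → deg G x = 3)
    (hC1 : C1prop G r) (hC2 : C2prop G r) (hv' : deg G v' ≤ 2)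
    {D : Set (V ⊕ (Fin 2 ⊕ Fin 3))}
    (h1 : ∀ u ∈ D, ∀ v ∈ D, ¬ (addK23 G v' t).Adj u v)
    (h2 : Sum.inl r ∉ D)
    (h3 : ∀ x, (addK23 G v' t).Adj (Sum.inl r) x → x ∉ D)
    (h4 : ∀ x, x ≠ Sum.inl r → x ∉ D → ∃ y ∈ D, (addK23 G v' t).Adj y x)
    (hI : ∀ i, Sum.inr (Sum.inl i) ∉ D) : iNum G + 2 ≤ D.ncard := by
  have hsplit := ncard_split D
  set DV : Set V := {a | Sum.inl a ∈ D} with hDVdef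
  have hDVind : ∀ a ∈ DV, ∀ b ∈ DV, ¬ G.Adj a b := fun a ha b hb hab =>
    h1 _ ha _ hb (addK23_adj_inl_inl.2 hab)
  have hrDV : r ∉ DV := h2
  have hnbr : ∀ x, G.Adj r x → x ∉ DV := fun x hadj =>
    h3 (Sum.inl x) (addK23_adj_inl_inl.2 hadj)
  have hRne : ∀ k, k ≠ t → Sum.inr (Sum.inr k) ∈ D := by
    intro k hkt
    by_contra hn
    obtain ⟨y, hy, hadj⟩ := h4 _ (by simp) hn
    rcases y with a | z
    · rw [addK23_adj_inl_inr] at hadj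
      exact hkt (by simpa using hadj.2)
    · rcases z with i | k'
      · exact hI i hy
      · exact absurd hadj (by simp)
  have hv'ner : v' ≠ r := by
    intro hveq
    have hadjRt : (addK23 G v' t).Adj (Sum.inl r) (Sum.inr (Sum.inr t)) :=
      addK23_adj_inl_inr.2 ⟨hveq.symm, rfl⟩
    have hRtD : Sum.inr (Sum.inr t) ∉ D := h3 _ hadjRt
    obtain ⟨y, hy, hadj⟩ := h4 _ (by simp) hRtD
    rcases y with a | z
    · rw [addK23_adj_inl_inr] at hadj
      rw [hadj.1, hveq] at hy
      exact h2 hy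
    · rcases z with i | k'
      · exact hI i hy
      · exact absurd hadj (by simp)
  have hdegv' : deg G v' = 2 := le_antisymm hv' (hdeg2v v' hv'ner)
  have hnadj_rv' : ¬ G.Adj r v' := fun h => by
    have := hadjdeg v' h; omega
  by_cases hRt : Sum.inr (Sum.inr t) ∈ D
  · -- B1 : all three R's in D
    have hv'D : v' ∉ DV := fun h =>
      h1 _ h _ hRt (addK23_adj_inl_inr.2 ⟨rfl, rfl⟩)
    have hX : D ∩ Set.range Sum.inr =
        (fun k => (Sum.inr (Sum.inr k) : V ⊕ (Fin 2 ⊕ Fin 3))) '' Set.univ := by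
      ext x
      constructor
      · rintro ⟨hxD, z, rfl⟩
        rcases z with i | k
        · exact absurd hxD (hI i)
        · exact ⟨k, trivial, rfl⟩
      · rintro ⟨k, -, rfl⟩
        refine ⟨?_, Sum.inr k, rfl⟩
        by_cases hk : k = t
        · exact hk ▸ hRt
        · exact hRne k hk
    have hXcard : (D ∩ Set.range Sum.inr).ncard = 3 := by
      rw [hX, Set.ncard_image_of_injective _ (fun a b h => by simpa using h),
        Set.ncard_univ]
      simp [Nat.card_eq_fintype_card]
    have hDVdom : ∀ x, x ≠ r → x ∉ DV → x ≠ v' → ∃ b ∈ DV, G.Adj b x := by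
      intro x hxr hx hxv
      obtain ⟨y, hy, hadj⟩ := h4 (Sum.inl x) (by simp [hxr]) hx
      rcases y with b | z
      · exact ⟨b, hy, addK23_adj_inl_inl.1 hadj⟩
      · rw [addK23_adj_inr_inl] at hadj
        exact absurd hadj.1 hxv
    by_cases hv'dom : ∃ b ∈ DV, G.Adj b v'
    · have := hC1 DV hDVind hrDV hnbr (by
        intro x hxr hx
        by_cases hxv : x = v'
        · subst hxv; exact hv'dom
        · exact hDVdom x hxr hx hxv)
      omega
    · push_neg at hv'dom
      have hD' := hC2 (insert v' DV) (by
          intro x hx y hy hxy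
          rcases Set.mem_insert_iff.1 hx with hx1 | hx2 <;>
            rcases Set.mem_insert_iff.1 hy with hy1 | hy2
          · exact hxy.ne (hx1.trans hy1.symm)
          · rw [hx1] at hxy; exact hv'dom y hy2 hxy.symm
          · rw [hy1] at hxy; exact hv'dom x hx2 hxy
          · exact hDVind x hx2 y hy2 hxy)
        (by
          intro h
          rcases Set.mem_insert_iff.1 h with h | h
          · exact hv'ner h.symm
          · exact hrDV h)
        (by
          intro x hadj h
          rcases Set.mem_insert_iff.1 h with h | h
          · rw [h] at hadj; exact hnadj_rv' hadj
          · exact hnbr x hadj h)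
        (by
          intro x hxr hx
          have hxv : x ≠ v' := fun h => hx (h ▸ Set.mem_insert _ _)
          have hxDV : x ∉ DV := fun h => hx (Set.mem_insert_of_mem _ h)
          obtain ⟨b, hb, hadj⟩ := hDVdom x hxr hxDV hxv
          exact ⟨b, Set.mem_insert_of_mem _ hb, hadj⟩)
        ⟨v', Set.mem_insert _ _, hdegv'⟩
      have hcard : (insert v' DV).ncard = DV.ncard + 1 :=
        Set.ncard_insert_of_notMem hv'D (Set.toFinite _)
      omega
  · -- B2 : v' ∈ D
    have hv'DV : v' ∈ DV := by
      obtain ⟨y, hy, hadj⟩ := h4 _ (by simp) hRt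
      rcases y with a | z
      · rw [addK23_adj_inl_inr] at hadj
        rw [← hadj.1]; exact hy
      · rcases z with i | k'
        · exact absurd hy (hI i)
        · exact absurd hadj (by simp)
    have hX : D ∩ Set.range Sum.inr =
        (fun k => (Sum.inr (Sum.inr k) : V ⊕ (Fin 2 ⊕ Fin 3))) '' ({t}ᶜ) := by
      ext x
      constructor
      · rintro ⟨hxD, z, rfl⟩
        rcases z with i | k
        · exact absurd hxD (hI i)
        · refine ⟨k, ?_, rfl⟩
          intro hk
          simp only [Set.mem_singleton_iff] at hk
          exact hRt (hk ▸ hxD)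
      · rintro ⟨k, hk, rfl⟩
        exact ⟨hRne k (by simpa using hk), Sum.inr k, rfl⟩
    have hXcard : (D ∩ Set.range Sum.inr).ncard = 2 := by
      rw [hX, Set.ncard_image_of_injective _ (fun a b h => by simpa using h),
        ncard_compl_singleton_fin3]
    have := hC2 DV hDVind hrDV hnbr (by
        intro x hxr hx
        obtain ⟨y, hy, hadj⟩ := h4 (Sum.inl x) (by simp [hxr]) hx
        rcases y with b | z
        · exact ⟨b, hy, addK23_adj_inl_inl.1 hadj⟩
        · rw [addK23_adj_inr_inl] at hadj
          obtain ⟨rfl, rfl⟩ := hadj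
          exact absurd hy hRt)
      ⟨v', hv'DV, hdegv'⟩
    omega

lemma extend_C1 (hdeg2v : ∀ x, x ≠ r → 2 ≤ deg G x)
    (hadjdeg : ∀ x, G.Adj r x → deg G x = 3)
    (hC1 : C1prop G r) (hC2 : C2prop G r) (hv' : deg G v' ≤ 2) :
    C1prop (addK23 G v' t) (Sum.inl r) := by
  intro D h1 h2 h3 h4
  rw [iNum_addK23]
  by_cases hI : ∃ i, Sum.inr (Sum.inl i) ∈ D
  · obtain ⟨i₀, hi₀⟩ := hI
    have hR : ∀ k, Sum.inr (Sum.inr k) ∉ D := fun k hk =>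
      h1 _ hi₀ _ hk (by simp)
    have hsplit := ncard_split D
    set DV : Set V := {a | Sum.inl a ∈ D} with hDVdef
    have hIall : ∀ i, Sum.inr (Sum.inl i) ∈ D := by
      intro i
      by_contra hni
      obtain ⟨y, hy, hadj⟩ := h4 _ (by simp) hni
      rcases y with a | z
      · rw [addK23_adj_inl_inr] at hadj
        exact nomatch hadj.2
      · rcases z with i' | k
        · exact absurd hadj (by simp)
        · exact absurd hy (hR k)
    have hX : D ∩ Set.range Sum.inr =
        {Sum.inr (Sum.inl 0), Sum.inr (Sum.inl 1)} := by
      ext x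
      constructor
      · rintro ⟨hxD, z, rfl⟩
        rcases z with i | k
        · have : i = 0 ∨ i = 1 := by omega
          rcases this with rfl | rfl
          · exact Set.mem_insert _ _
          · exact Set.mem_insert_of_mem _ rfl
        · exact absurd hxD (hR k)
      · rintro (rfl | rfl)
        · exact ⟨hIall 0, Sum.inl 0, rfl⟩
        · exact ⟨hIall 1, Sum.inl 1, rfl⟩
    have hXcard : (D ∩ Set.range Sum.inr).ncard = 2 := by
      rw [hX]; exact Set.ncard_pair (by simp)
    have := hC1 DV
      (fun a ha b hb hab => h1 _ ha _ hb (addK23_adj_inl_inl.2 hab))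
      h2
      (fun x hadj => h3 (Sum.inl x) (addK23_adj_inl_inl.2 hadj))
      (by
        intro x hxr hx
        obtain ⟨y, hy, hadj⟩ := h4 (Sum.inl x) (by simp [hxr]) hx
        rcases y with b | z
        · exact ⟨b, hy, addK23_adj_inl_inl.1 hadj⟩
        · rw [addK23_adj_inr_inl] at hadj
          obtain ⟨rfl, rfl⟩ := hadj
          exact absurd hy (hR t))
    omega
  · push_neg at hI
    have := extend_caseB hdeg2v hadjdeg hC1 hC2 hv' h1 h2 h3 h4 hI
    omega

lemma extend_C2 (hdeg2v : ∀ x, x ≠ r → 2 ≤ deg G x)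
    (hadjdeg : ∀ x, G.Adj r x → deg G x = 3)
    (hC1 : C1prop G r) (hC2 : C2prop G r) (hv' : deg G v' ≤ 2) :
    C2prop (addK23 G v' t) (Sum.inl r) := by
  intro D h1 h2 h3 h4 hp
  rw [iNum_addK23]
  by_cases hI : ∃ i, Sum.inr (Sum.inl i) ∈ D
  · obtain ⟨i₀, hi₀⟩ := hI
    have hR : ∀ k, Sum.inr (Sum.inr k) ∉ D := fun k hk =>
      h1 _ hi₀ _ hk (by simp)
    have hsplit := ncard_split D
    set DV : Set V := {a | Sum.inl a ∈ D} with hDVdef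
    have hIall : ∀ i, Sum.inr (Sum.inl i) ∈ D := by
      intro i
      by_contra hni
      obtain ⟨y, hy, hadj⟩ := h4 _ (by simp) hni
      rcases y with a | z
      · rw [addK23_adj_inl_inr] at hadj
        exact nomatch hadj.2
      · rcases z with i' | k
        · exact absurd hadj (by simp)
        · exact absurd hy (hR k)
    have hX : D ∩ Set.range Sum.inr =
        {Sum.inr (Sum.inl 0), Sum.inr (Sum.inl 1)} := by
      ext x
      constructor
      · rintro ⟨hxD, z, rfl⟩
        rcases z with i | k
        · have : i = 0 ∨ i = 1 := by omega
          rcases this with rfl | rfl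
          · exact Set.mem_insert _ _
          · exact Set.mem_insert_of_mem _ rfl
        · exact absurd hxD (hR k)
      · rintro (rfl | rfl)
        · exact ⟨hIall 0, Sum.inl 0, rfl⟩
        · exact ⟨hIall 1, Sum.inl 1, rfl⟩
    have hXcard : (D ∩ Set.range Sum.inr).ncard = 2 := by
      rw [hX]; exact Set.ncard_pair (by simp)
    -- the special vertex p of degree 2 must be of the form inl w with w ≠ v'
    obtain ⟨p, hpD, hpdeg⟩ := hp
    rcases p with w | z
    swap
    · rcases z with i | k
      · rw [deg_addK23_I] at hpdeg; omega
      · exact absurd hpD (hR k)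
    have hwv' : w ≠ v' := by
      intro hveq
      subst hveq
      rw [deg_addK23_inl_eq] at hpdeg
      have hw1 : deg G w = 1 := by omega
      have hwr : w = r := by
        by_contra hwr
        have := hdeg2v w hwr
        omega
      rw [hwr] at hpD
      exact h2 hpD
    rw [deg_addK23_inl_ne hwv'] at hpdeg
    have := hC2 DV
      (fun a ha b hb hab => h1 _ ha _ hb (addK23_adj_inl_inl.2 hab))
      h2
      (fun x hadj => h3 (Sum.inl x) (addK23_adj_inl_inl.2 hadj))
      (by
        intro x hxr hx
        obtain ⟨y, hy, hadj⟩ := h4 (Sum.inl x) (by simp [hxr]) hx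
        rcases y with b | z
        · exact ⟨b, hy, addK23_adj_inl_inl.1 hadj⟩
        · rw [addK23_adj_inr_inl] at hadj
          obtain ⟨rfl, rfl⟩ := hadj
          exact absurd hy (hR t))
      ⟨w, hpD, hpdeg⟩
    omega
  · push_neg at hI
    exact extend_caseB hdeg2v hadjdeg hC1 hC2 hv' h1 h2 h3 h4 hI


lemma main_lb (hdeg2v : ∀ x, x ≠ r → 2 ≤ deg G x)
    (hadjdeg : ∀ x, G.Adj r x → deg G x = 3)
    (hC2 : C2prop G r) {k : Fin 3} (hkt : k ≠ t) {u : V}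
    (hadjru : ∀ x, G.Adj r x ↔ x = u)
    (hdegu : deg G u = 3) (hdegv' : deg G v' = 2) (hv'ner : v' ≠ r) (huv' : u ≠ v')
    (hnadj_rv' : ¬ G.Adj r v') (hadjru' : G.Adj r u)
    {S : Set ((V ⊕ (Fin 2 ⊕ Fin 3)) ⊕ Unit)}
    (hind : ∀ x ∈ S, ∀ y ∈ S,
      ¬ (addLink (addK23 G v' t) (Sum.inl r) (Sum.inr (Sum.inr k))).Adj x y)
    (hdom : ∀ x, x ∉ S → ∃ y ∈ S,
      (addLink (addK23 G v' t) (Sum.inl r) (Sum.inr (Sum.inr k))).Adj y x) :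
    iNum G + 2 ≤ S.ncard := by
  have hrne : r ≠ v' := hv'ner.symm
  have hsplit1 := ncard_split S
  set SB : Set (V ⊕ (Fin 2 ⊕ Fin 3)) := {x | Sum.inl x ∈ S} with hSBdef
  have hsplit2 := ncard_split SB
  set SV : Set V := {a | Sum.inl a ∈ SB} with hSVdef
  -- independence on the G part
  have hindG : ∀ a ∈ SV, ∀ b ∈ SV, ¬ G.Adj a b := fun a ha b hb hab =>
    hind _ ha _ hb (addLink_adj_inl_inl.2 (addK23_adj_inl_inl.2 hab))
  -- domination helpers
  have hdomV : ∀ x : V, Sum.inl (Sum.inl x) ∉ S →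
      (∃ b, Sum.inl (Sum.inl b) ∈ S ∧ G.Adj b x) ∨
      (x = v' ∧ Sum.inl (Sum.inr (Sum.inr t)) ∈ S) ∨
      (x = r ∧ Sum.inr () ∈ S) := by
    intro x hx
    obtain ⟨y, hy, hadj⟩ := hdom _ hx
    rcases y with (b | z) | u'
    · rw [addLink_adj_inl_inl, addK23_adj_inl_inl] at hadj
      exact Or.inl ⟨b, hy, hadj⟩
    · rw [addLink_adj_inl_inl, addK23_adj_inr_inl] at hadj
      refine Or.inr (Or.inl ⟨hadj.1, ?_⟩)
      rw [← hadj.2]; exact hy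
    · rw [addLink_adj_inr_inl] at hadj
      rcases hadj with h | h
      · cases u'; exact Or.inr (Or.inr ⟨Sum.inl.inj h, hy⟩)
      · exact nomatch h
  have hdomR : ∀ m : Fin 3, Sum.inl (Sum.inr (Sum.inr m)) ∉ S →
      (∃ i, Sum.inl (Sum.inr (Sum.inl i)) ∈ S) ∨
      (m = t ∧ Sum.inl (Sum.inl v') ∈ S) ∨
      (m = k ∧ Sum.inr () ∈ S) := by
    intro m hm
    obtain ⟨y, hy, hadj⟩ := hdom _ hm
    rcases y with (b | z) | u'
    · rw [addLink_adj_inl_inl, addK23_adj_inl_inr] at hadj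
      refine Or.inr (Or.inl ⟨by simpa using hadj.2, ?_⟩)
      rw [← hadj.1]; exact hy
    · rcases z with i | m'
      · exact Or.inl ⟨i, hy⟩
      · rw [addLink_adj_inl_inl] at hadj
        exact absurd hadj (by simp)
    · rw [addLink_adj_inr_inl] at hadj
      rcases hadj with h | h
      · exact nomatch h
      · cases u'
        refine Or.inr (Or.inr ⟨?_, hy⟩)
        simpa using h
  have hdomI : ∀ i : Fin 2, Sum.inl (Sum.inr (Sum.inl i)) ∉ S →
      ∃ m, Sum.inl (Sum.inr (Sum.inr m)) ∈ S := by
    intro i hi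
    obtain ⟨y, hy, hadj⟩ := hdom _ hi
    rcases y with (b | z) | u'
    · rw [addLink_adj_inl_inl, addK23_adj_inl_inr] at hadj
      exact nomatch hadj.2
    · rcases z with i' | m
      · rw [addLink_adj_inl_inl] at hadj
        exact absurd hadj (by simp)
      · exact ⟨m, hy⟩
    · rw [addLink_adj_inr_inl] at hadj
      rcases hadj with h | h
      · exact nomatch h
      · simp at h
  have hdomv2 : Sum.inr () ∉ S →
      Sum.inl (Sum.inl r) ∈ S ∨ Sum.inl (Sum.inr (Sum.inr k)) ∈ S := by
    intro h
    obtain ⟨y, hy, hadj⟩ := hdom _ h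
    rcases y with x | u'
    · rw [addLink_adj_inl_inr] at hadj
      rcases hadj with h' | h'
      · rw [h'] at hy; exact Or.inl hy
      · rw [h'] at hy; exact Or.inr hy
    · exact absurd hadj (by simp)
  -- unit-part cardinality
  have hU1 : Sum.inr () ∈ S → (S ∩ Set.range Sum.inr).ncard = 1 := by
    intro h
    have : S ∩ Set.range Sum.inr = {Sum.inr ()} := by
      ext x
      constructor
      · rintro ⟨hxS, u', rfl⟩
        cases u'; rfl
      · rintro rfl
        exact ⟨h, (), rfl⟩
    rw [this, Set.ncard_singleton]
  have hU0 : Sum.inr () ∉ S → (S ∩ Set.range Sum.inr).ncard = 0 := by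
    intro h
    have : S ∩ Set.range Sum.inr = (∅ : Set _) := by
      ext x
      simp only [Set.mem_empty_iff_false, iff_false]
      rintro ⟨hxS, u', rfl⟩
      cases u'; exact h hxS
    rw [this, Set.ncard_empty]
  by_cases hI : ∃ i, Sum.inl (Sum.inr (Sum.inl i)) ∈ S
  · -- Case A : both small-side vertices of the copy in S
    obtain ⟨i₀, hi₀⟩ := hI
    have hR : ∀ m, Sum.inl (Sum.inr (Sum.inr m)) ∉ S := fun m hm =>
      hind _ hi₀ _ hm (addLink_adj_inl_inl.2 (by simp))
    have hIall : ∀ i, Sum.inl (Sum.inr (Sum.inl i)) ∈ S := by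
      intro i
      by_contra hni
      obtain ⟨m, hm⟩ := hdomI i hni
      exact hR m hm
    have hK : SB ∩ Set.range Sum.inr =
        {Sum.inr (Sum.inl 0), Sum.inr (Sum.inl 1)} := by
      ext x
      constructor
      · rintro ⟨hxS, z, rfl⟩
        rcases z with i | m
        · have : i = 0 ∨ i = 1 := by omega
          rcases this with rfl | rfl
          · exact Set.mem_insert _ _
          · exact Set.mem_insert_of_mem _ rfl
        · exact absurd hxS (hR m)
      · rintro (rfl | rfl)
        · exact ⟨hIall 0, Sum.inl 0, rfl⟩
        · exact ⟨hIall 1, Sum.inl 1, rfl⟩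
    have hKcard : (SB ∩ Set.range Sum.inr).ncard = 2 := by
      rw [hK]; exact Set.ncard_pair (by simp)
    by_cases hv2 : Sum.inr () ∈ S
    · have hrSV : r ∉ SV := fun h =>
        hind _ hv2 _ h (addLink_adj_inr_inl.2 (Or.inl rfl))
      have hSVdom : ∀ x, x ≠ r → x ∉ SV → ∃ b ∈ SV, G.Adj b x := by
        intro x hxr hx
        rcases hdomV x hx with ⟨b, hb, hadj⟩ | ⟨-, hRt⟩ | ⟨hxr', -⟩
        · exact ⟨b, hb, hadj⟩
        · exact absurd hRt (hR t)
        · exact absurd hxr' hxr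
      have hUcard := hU1 hv2
      by_cases hu : u ∈ SV
      · have hid : IsIDSet G SV := by
          refine ⟨hindG, ?_⟩
          intro x hx
          by_cases hxr : x = r
          · exact ⟨u, hu, hxr ▸ hadjru'.symm⟩
          · exact hSVdom x hxr hx
        have := iNum_le hid
        omega
      · have hid : IsIDSet G (insert r SV) := by
          constructor
          · intro x hx y hy hxy
            rcases Set.mem_insert_iff.1 hx with hx1 | hx2 <;>
              rcases Set.mem_insert_iff.1 hy with hy1 | hy2
            · exact hxy.ne (hx1.trans hy1.symm)
            · rw [hx1] at hxy
              exact hu ((hadjru y).1 hxy ▸ hy2)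
            · rw [hy1] at hxy
              exact hu ((hadjru x).1 hxy.symm ▸ hx2)
            · exact hindG x hx2 y hy2 hxy
          · intro x hx
            have hxr : x ≠ r := fun h => hx (h ▸ Set.mem_insert _ _)
            have hxSV : x ∉ SV := fun h => hx (Set.mem_insert_of_mem _ h)
            obtain ⟨b, hb, hadj⟩ := hSVdom x hxr hxSV
            exact ⟨b, Set.mem_insert_of_mem _ hb, hadj⟩
        have hcard : (insert r SV).ncard = SV.ncard + 1 :=
          Set.ncard_insert_of_notMem hrSV (Set.toFinite _)
        have := iNum_le hid
        omega
    · have hrSV : r ∈ SV := by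
        rcases hdomv2 hv2 with h | h
        · exact h
        · exact absurd h (hR k)
      have hUcard := hU0 hv2
      have hid : IsIDSet G SV := by
        refine ⟨hindG, ?_⟩
        intro x hx
        rcases hdomV x hx with ⟨b, hb, hadj⟩ | ⟨-, hRt⟩ | ⟨-, hv2'⟩
        · exact ⟨b, hb, hadj⟩
        · exact absurd hRt (hR t)
        · exact absurd hv2' hv2
      have := iNum_le hid
      omega
  · -- Case B : no small-side vertex of the copy in S
    push_neg at hI
    obtain ⟨j3, hj3t, hj3k, hall⟩ := fin3_third t k hkt
    have hRother : ∀ m, m ≠ t → m ≠ k → Sum.inl (Sum.inr (Sum.inr m)) ∈ S := by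
      intro m hmt hmk
      by_contra hn
      rcases hdomR m hn with ⟨i, hi⟩ | ⟨hmt', -⟩ | ⟨hmk', -⟩
      · exact hI i hi
      · exact hmt hmt'
      · exact hmk hmk'
    have hRj3 : Sum.inl (Sum.inr (Sum.inr j3)) ∈ S := hRother j3 hj3t hj3k
    by_cases hRt : Sum.inl (Sum.inr (Sum.inr t)) ∈ S
    · have hv'SV : v' ∉ SV := fun h =>
        hind _ h _ hRt (addLink_adj_inl_inl.2 (addK23_adj_inl_inr.2 ⟨rfl, rfl⟩))
      by_cases hRk : Sum.inl (Sum.inr (Sum.inr k)) ∈ S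
      · -- B-i : all three R's in S, v2 ∉ S
        have hv2 : Sum.inr () ∉ S := fun h =>
          hind _ hRk _ h (addLink_adj_inl_inr.2 (Or.inr rfl))
        have hUcard := hU0 hv2
        have hK : SB ∩ Set.range Sum.inr =
            (fun m => (Sum.inr (Sum.inr m) : V ⊕ (Fin 2 ⊕ Fin 3))) '' Set.univ := by
          ext x
          constructor
          · rintro ⟨hxS, z, rfl⟩
            rcases z with i | m
            · exact absurd hxS (hI i)
            · exact ⟨m, trivial, rfl⟩
          · rintro ⟨m, -, rfl⟩
            refine ⟨?_, Sum.inr m, rfl⟩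
            rcases hall m with rfl | rfl | rfl
            · exact hRt
            · exact hRk
            · exact hRj3
        have hKcard : (SB ∩ Set.range Sum.inr).ncard = 3 := by
          rw [hK, Set.ncard_image_of_injective _ (fun a b h => by simpa using h),
            Set.ncard_univ]
          simp [Nat.card_eq_fintype_card]
        have hSVdom : ∀ x, x ∉ SV → x ≠ v' → ∃ b ∈ SV, G.Adj b x := by
          intro x hx hxv
          rcases hdomV x hx with ⟨b, hb, hadj⟩ | ⟨hxv', -⟩ | ⟨-, hv2'⟩
          · exact ⟨b, hb, hadj⟩
          · exact absurd hxv' hxv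
          · exact absurd hv2' hv2
        by_cases hv'dom : ∃ b ∈ SV, G.Adj b v'
        · have hid : IsIDSet G SV := by
            refine ⟨hindG, ?_⟩
            intro x hx
            by_cases hxv : x = v'
            · exact hxv ▸ hv'dom
            · exact hSVdom x hx hxv
          have := iNum_le hid
          omega
        · push_neg at hv'dom
          have hid : IsIDSet G (insert v' SV) := by
            constructor
            · intro x hx y hy hxy
              rcases Set.mem_insert_iff.1 hx with hx1 | hx2 <;>
                rcases Set.mem_insert_iff.1 hy with hy1 | hy2
              · exact hxy.ne (hx1.trans hy1.symm)
              · rw [hx1] at hxy; exact hv'dom y hy2 hxy.symm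
              · rw [hy1] at hxy; exact hv'dom x hx2 hxy
              · exact hindG x hx2 y hy2 hxy
            · intro x hx
              have hxv : x ≠ v' := fun h => hx (h ▸ Set.mem_insert _ _)
              have hxSV : x ∉ SV := fun h => hx (Set.mem_insert_of_mem _ h)
              obtain ⟨b, hb, hadj⟩ := hSVdom x hxSV hxv
              exact ⟨b, Set.mem_insert_of_mem _ hb, hadj⟩
          have hcard : (insert v' SV).ncard = SV.ncard + 1 :=
            Set.ncard_insert_of_notMem hv'SV (Set.toFinite _)
          have := iNum_le hid
          omega
      · -- B-iii-a : R k ∉ S, so v2 ∈ S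
        have hv2 : Sum.inr () ∈ S := by
          rcases hdomR k hRk with ⟨i, hi⟩ | ⟨hkt', -⟩ | ⟨-, h⟩
          · exact absurd hi (hI i)
          · exact absurd hkt' hkt
          · exact h
        have hUcard := hU1 hv2
        have hrSV : r ∉ SV := fun h =>
          hind _ h _ hv2 (addLink_adj_inl_inr.2 (Or.inl rfl))
        have hK : SB ∩ Set.range Sum.inr =
            {Sum.inr (Sum.inr t), Sum.inr (Sum.inr j3)} := by
          ext x
          constructor
          · rintro ⟨hxS, z, rfl⟩
            rcases z with i | m
            · exact absurd hxS (hI i)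
            · rcases hall m with rfl | rfl | rfl
              · exact Set.mem_insert _ _
              · exact absurd hxS hRk
              · exact Set.mem_insert_of_mem _ rfl
          · rintro (rfl | rfl)
            · exact ⟨hRt, Sum.inr t, rfl⟩
            · exact ⟨hRj3, Sum.inr j3, rfl⟩
        have hKcard : (SB ∩ Set.range Sum.inr).ncard = 2 := by
          rw [hK]
          exact Set.ncard_pair (by simp [(Ne.symm hj3t)])
        have hSVdom : ∀ x, x ∉ SV → x ≠ v' → x ≠ r → ∃ b ∈ SV, G.Adj b x := by
          intro x hx hxv hxr
          rcases hdomV x hx with ⟨b, hb, hadj⟩ | ⟨hxv', -⟩ | ⟨hxr', -⟩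
          · exact ⟨b, hb, hadj⟩
          · exact absurd hxv' hxv
          · exact absurd hxr' hxr
        by_cases hu : u ∈ SV
        · by_cases hv'dom : ∃ b ∈ SV, G.Adj b v'
          · have hid : IsIDSet G SV := by
              refine ⟨hindG, ?_⟩
              intro x hx
              by_cases hxv : x = v'
              · exact hxv ▸ hv'dom
              by_cases hxr : x = r
              · exact ⟨u, hu, hxr ▸ hadjru'.symm⟩
              · exact hSVdom x hx hxv hxr
            have := iNum_le hid
            omega
          · push_neg at hv'dom
            have hid : IsIDSet G (insert v' SV) := by
              constructor
              · intro x hx y hy hxy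
                rcases Set.mem_insert_iff.1 hx with hx1 | hx2 <;>
                  rcases Set.mem_insert_iff.1 hy with hy1 | hy2
                · exact hxy.ne (hx1.trans hy1.symm)
                · rw [hx1] at hxy; exact hv'dom y hy2 hxy.symm
                · rw [hy1] at hxy; exact hv'dom x hx2 hxy
                · exact hindG x hx2 y hy2 hxy
              · intro x hx
                have hxv : x ≠ v' := fun h => hx (h ▸ Set.mem_insert _ _)
                have hxSV : x ∉ SV := fun h => hx (Set.mem_insert_of_mem _ h)
                by_cases hxr : x = r
                · exact ⟨u, Set.mem_insert_of_mem _ hu, hxr ▸ hadjru'.symm⟩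
                · obtain ⟨b, hb, hadj⟩ := hSVdom x hxSV hxv hxr
                  exact ⟨b, Set.mem_insert_of_mem _ hb, hadj⟩
            have hcard : (insert v' SV).ncard = SV.ncard + 1 :=
              Set.ncard_insert_of_notMem hv'SV (Set.toFinite _)
            have := iNum_le hid
            omega
        · by_cases hv'dom : ∃ b ∈ SV, G.Adj b v'
          · have hid : IsIDSet G (insert r SV) := by
              constructor
              · intro x hx y hy hxy
                rcases Set.mem_insert_iff.1 hx with hx1 | hx2 <;>
                  rcases Set.mem_insert_iff.1 hy with hy1 | hy2
                · exact hxy.ne (hx1.trans hy1.symm)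
                · rw [hx1] at hxy
                  exact hu ((hadjru y).1 hxy ▸ hy2)
                · rw [hy1] at hxy
                  exact hu ((hadjru x).1 hxy.symm ▸ hx2)
                · exact hindG x hx2 y hy2 hxy
              · intro x hx
                have hxr : x ≠ r := fun h => hx (h ▸ Set.mem_insert _ _)
                have hxSV : x ∉ SV := fun h => hx (Set.mem_insert_of_mem _ h)
                by_cases hxv : x = v'
                · obtain ⟨b, hb, hadj⟩ := hv'dom
                  exact ⟨b, Set.mem_insert_of_mem _ hb, hxv ▸ hadj⟩
                · obtain ⟨b, hb, hadj⟩ := hSVdom x hxSV hxv hxr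
                  exact ⟨b, Set.mem_insert_of_mem _ hb, hadj⟩
            have hcard : (insert r SV).ncard = SV.ncard + 1 :=
              Set.ncard_insert_of_notMem hrSV (Set.toFinite _)
            have := iNum_le hid
            omega
          · push_neg at hv'dom
            have hv'SV2 : v' ∉ SV := hv'SV
            have hle := hC2 (insert v' SV)
              (by
                intro x hx y hy hxy
                rcases Set.mem_insert_iff.1 hx with hx1 | hx2 <;>
                  rcases Set.mem_insert_iff.1 hy with hy1 | hy2
                · exact hxy.ne (hx1.trans hy1.symm)
                · rw [hx1] at hxy; exact hv'dom y hy2 hxy.symm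
                · rw [hy1] at hxy; exact hv'dom x hx2 hxy
                · exact hindG x hx2 y hy2 hxy)
              (by
                intro h
                rcases Set.mem_insert_iff.1 h with h | h
                · exact hrne h
                · exact hrSV h)
              (by
                intro x hadj h
                have hxu : x = u := (hadjru x).1 hadj
                rcases Set.mem_insert_iff.1 h with h | h
                · exact huv' (hxu ▸ h)
                · exact hu (hxu ▸ h))
              (by
                intro x hxr hx
                have hxv : x ≠ v' := fun h => hx (h ▸ Set.mem_insert _ _)
                have hxSV : x ∉ SV := fun h => hx (Set.mem_insert_of_mem _ h)
                obtain ⟨b, hb, hadj⟩ := hSVdom x hxSV hxv hxr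
                exact ⟨b, Set.mem_insert_of_mem _ hb, hadj⟩)
              ⟨v', Set.mem_insert _ _, hdegv'⟩
            have hcard : (insert v' SV).ncard = SV.ncard + 1 :=
              Set.ncard_insert_of_notMem hv'SV2 (Set.toFinite _)
            omega
    · -- R t ∉ S, so inl v' ∈ S
      have hv'SV : v' ∈ SV := by
        rcases hdomR t hRt with ⟨i, hi⟩ | ⟨-, h⟩ | ⟨htk, -⟩
        · exact absurd hi (hI i)
        · exact h
        · exact absurd htk.symm hkt
      by_cases hRk : Sum.inl (Sum.inr (Sum.inr k)) ∈ S
      · -- B-ii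
        have hv2 : Sum.inr () ∉ S := fun h =>
          hind _ hRk _ h (addLink_adj_inl_inr.2 (Or.inr rfl))
        have hUcard := hU0 hv2
        have hK : SB ∩ Set.range Sum.inr =
            {Sum.inr (Sum.inr k), Sum.inr (Sum.inr j3)} := by
          ext x
          constructor
          · rintro ⟨hxS, z, rfl⟩
            rcases z with i | m
            · exact absurd hxS (hI i)
            · rcases hall m with rfl | rfl | rfl
              · exact absurd hxS hRt
              · exact Set.mem_insert _ _
              · exact Set.mem_insert_of_mem _ rfl
          · rintro (rfl | rfl)
            · exact ⟨hRk, Sum.inr k, rfl⟩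
            · exact ⟨hRj3, Sum.inr j3, rfl⟩
        have hKcard : (SB ∩ Set.range Sum.inr).ncard = 2 := by
          rw [hK]
          exact Set.ncard_pair (by simp [(Ne.symm hj3k)])
        have hid : IsIDSet G SV := by
          refine ⟨hindG, ?_⟩
          intro x hx
          rcases hdomV x hx with ⟨b, hb, hadj⟩ | ⟨hxv', -⟩ | ⟨-, hv2'⟩
          · exact ⟨b, hb, hadj⟩
          · exact absurd (hxv' ▸ hx) (fun h => h hv'SV)
          · exact absurd hv2' hv2
        have := iNum_le hid
        omega
      · -- B-iii-b
        have hv2 : Sum.inr () ∈ S := by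
          rcases hdomR k hRk with ⟨i, hi⟩ | ⟨hkt', -⟩ | ⟨-, h⟩
          · exact absurd hi (hI i)
          · exact absurd hkt' hkt
          · exact h
        have hUcard := hU1 hv2
        have hrSV : r ∉ SV := fun h =>
          hind _ h _ hv2 (addLink_adj_inl_inr.2 (Or.inl rfl))
        have hK : SB ∩ Set.range Sum.inr = {Sum.inr (Sum.inr j3)} := by
          ext x
          constructor
          · rintro ⟨hxS, z, rfl⟩
            rcases z with i | m
            · exact absurd hxS (hI i)
            · rcases hall m with rfl | rfl | rfl
              · exact absurd hxS hRt
              · exact absurd hxS hRk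
              · rfl
          · rintro rfl
            exact ⟨hRj3, Sum.inr j3, rfl⟩
        have hKcard : (SB ∩ Set.range Sum.inr).ncard = 1 := by
          rw [hK, Set.ncard_singleton]
        have hSVdom : ∀ x, x ∉ SV → x ≠ r → ∃ b ∈ SV, G.Adj b x := by
          intro x hx hxr
          rcases hdomV x hx with ⟨b, hb, hadj⟩ | ⟨hxv', -⟩ | ⟨hxr', -⟩
          · exact ⟨b, hb, hadj⟩
          · exact absurd (hxv' ▸ hx) (fun h => h hv'SV)
          · exact absurd hxr' hxr
        by_cases hu : u ∈ SV
        · have hid : IsIDSet G SV := by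
            refine ⟨hindG, ?_⟩
            intro x hx
            by_cases hxr : x = r
            · exact ⟨u, hu, hxr ▸ hadjru'.symm⟩
            · exact hSVdom x hx hxr
          have := iNum_le hid
          omega
        · have hle := hC2 SV hindG hrSV
            (by
              intro x hadj h
              exact hu ((hadjru x).1 hadj ▸ h))
            (fun x hxr hx => hSVdom x hx hxr)
            ⟨v', hv'SV, hdegv'⟩
          omega


lemma extend_M (hdeg2v : ∀ x, x ≠ r → 2 ≤ deg G x)
    (hadjdeg : ∀ x, G.Adj r x → deg G x = 3) (hrootdeg : 1 ≤ deg G r)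
    (hC2 : C2prop G r) (hM : Mprop G r) (hv' : deg G v' ≤ 2)
    (hL1B : ∃ S, IsIDSet (addK23 G v' t) S ∧ S.ncard = iNum (addK23 G v' t) ∧
      Sum.inl r ∈ S) :
    Mprop (addK23 G v' t) (Sum.inl r) := by
  intro hdeg1 w2 hw2ne hdeg2
  have hrne : r ≠ v' := by
    intro h
    rw [h, deg_addK23_inl_eq] at hdeg1
    rw [h] at hrootdeg
    omega
  have hdegGr : deg G r = 1 := by rwa [deg_addK23_inl_ne hrne] at hdeg1
  obtain ⟨u, hu⟩ : ∃ u, G.neighborSet r = {u} := Set.ncard_eq_one.1 hdegGr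
  have hadjru : ∀ x, G.Adj r x ↔ x = u := by
    intro x
    rw [← SimpleGraph.mem_neighborSet, hu, Set.mem_singleton_iff]
  have hadjru' : G.Adj r u := (hadjru u).2 rfl
  have hdegu : deg G u = 3 := hadjdeg u hadjru'
  have hv'ner : v' ≠ r := hrne.symm
  have hdegv' : deg G v' = 2 := le_antisymm hv' (hdeg2v v' hv'ner)
  have huv' : u ≠ v' := by intro h; rw [h] at hdegu; omega
  have hnadj_rv' : ¬ G.Adj r v' := fun h => by
    have := hadjdeg v' h; omega
  rcases w2 with w | z
  · -- w2 = inl w : use the commuting isomorphism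
    have hwr : w ≠ r := fun h => hw2ne (by rw [h])
    have hwv' : w ≠ v' := by
      intro h
      rw [h, deg_addK23_inl_eq] at hdeg2
      have h1 : deg G v' = 1 := by omega
      have := hdeg2v v' hv'ner
      omega
    have hdegw : deg G w = 2 := by rwa [deg_addK23_inl_ne hwv'] at hdeg2
    rw [iNum_congr (linkK23Iso G r w v' t), iNum_addK23, iNum_addK23,
      hM hdegGr w hwr hdegw]
  rcases z with i | k
  · rw [deg_addK23_I] at hdeg2; omega
  by_cases hkt : k = t
  · rw [hkt, deg_addK23_R_eq] at hdeg2; omega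
  -- main case : w2 = R k with k ≠ t
  apply le_antisymm
  · -- iNum T ≤ iNum B
    obtain ⟨S, hSid, hScard, hSr⟩ := hL1B
    have hid : IsIDSet (addLink (addK23 G v' t) (Sum.inl r) (Sum.inr (Sum.inr k)))
        (Sum.inl '' S) := by
      constructor
      · rintro x ⟨a, ha, rfl⟩ y ⟨b, hb, rfl⟩ hadj
        exact hSid.1 a ha b hb (addLink_adj_inl_inl.1 hadj)
      · rintro (b | u) hx
        · have hb : b ∉ S := fun h => hx ⟨b, h, rfl⟩
          obtain ⟨c, hc, hadj⟩ := hSid.2 b hb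
          exact ⟨Sum.inl c, ⟨c, hc, rfl⟩, addLink_adj_inl_inl.2 hadj⟩
        · exact ⟨Sum.inl (Sum.inl r), ⟨_, hSr, rfl⟩,
            addLink_adj_inl_inr.2 (Or.inl rfl)⟩
    have := iNum_le hid
    rwa [Set.ncard_image_of_injective _ Sum.inl_injective, hScard] at this
  · -- iNum B ≤ iNum T
    obtain ⟨S, hSid, hScard⟩ := iNum_spec
      (addLink (addK23 G v' t) (Sum.inl r) (Sum.inr (Sum.inr k)))
    rw [← hScard, iNum_addK23]
    obtain ⟨hind, hdom⟩ := hSid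
    exact main_lb hdeg2v hadjdeg hC2 hkt hadjru hdegu hdegv' hv'ner huv'
      hnadj_rv' hadjru' hind hdom

end Extend



lemma base_inv : Inv baseGraph 5 := by
  refine ⟨?_, ?_, ?_, base_L1, ?_, ?_, ?_⟩
  · intro x hx
    rw [deg_base]
    fin_cases x <;> simp_all
  · intro x hadj
    rw [base_adj5] at hadj
    subst hadj
    rw [deg_base]
    decide
  · rw [deg_base]
    decide
  · intro D h1 h2 h3 h4
    have hfin := Set.toFinite D
    rw [iNum_base, Set.ncard_eq_toFinset_card D hfin]
    have h2' : (2 : Fin 6) ∉ D := h3 2 (by decide)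
    have := base_C1_fin hfin.toFinset
      (fun u hu v hv => h1 u (hfin.mem_toFinset.1 hu) v (hfin.mem_toFinset.1 hv))
      (fun h => h2 (hfin.mem_toFinset.1 h))
      (fun h => h2' (hfin.mem_toFinset.1 h))
      (by
        intro v hv5 hvF
        obtain ⟨y, hy, hadj⟩ := h4 v hv5 (fun h => hvF (hfin.mem_toFinset.2 h))
        exact ⟨y, hfin.mem_toFinset.2 hy, hadj⟩)
    omega
  · intro D h1 h2 h3 h4 hp
    have hfin := Set.toFinite D
    rw [iNum_base, Set.ncard_eq_toFinset_card D hfin]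
    have h2' : (2 : Fin 6) ∉ D := h3 2 (by decide)
    obtain ⟨p, hpD, hpdeg⟩ := hp
    exact base_C2_fin hfin.toFinset
      (fun u hu v hv => h1 u (hfin.mem_toFinset.1 hu) v (hfin.mem_toFinset.1 hv))
      (fun h => h2 (hfin.mem_toFinset.1 h))
      (fun h => h2' (hfin.mem_toFinset.1 h))
      (by
        intro v hv5 hvF
        obtain ⟨y, hy, hadj⟩ := h4 v hv5 (fun h => hvF (hfin.mem_toFinset.2 h))
        exact ⟨y, hfin.mem_toFinset.2 hy, hadj⟩)
      ⟨p, hfin.mem_toFinset.2 hpD, (base_deg2 p).1 hpdeg⟩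
  · intro h1 w2 hne h2
    rcases (base_deg2 w2).1 h2 with rfl | rfl
    · rw [base_addLink3, iNum_base]
    · rw [base_addLink4, iNum_base]

theorem grand : ∀ {V : Type} {G : SimpleGraph V} {r : V}, FamilyBRoot G r → Inv G r := by
  intro V G r h
  induction h with
  | base => exact base_inv
  | @extend V G r hG v' hv' t ih =>
    haveI : Finite V := famFinite hG
    obtain ⟨ih1, ih2, ih3, ih4, ih5, ih6, ih7⟩ := ih
    have c4 : ∃ S, IsIDSet (addK23 G v' t) S ∧ S.ncard = iNum (addK23 G v' t) ∧
        Sum.inl r ∈ S := by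
      obtain ⟨S, hS, hc, hr⟩ := ih4
      refine ⟨Sum.inl '' S ∪ {Sum.inr (Sum.inl 0), Sum.inr (Sum.inl 1)},
        isIDSet_addK23_of hS, ?_, Or.inl ⟨r, hr, rfl⟩⟩
      rw [ncard_extSet, iNum_addK23, hc]
    refine ⟨?_, ?_, ?_, c4, extend_C1 ih1 ih2 ih5 ih6 hv',
      extend_C2 ih1 ih2 ih5 ih6 hv', extend_M ih1 ih2 ih3 ih6 ih7 hv' c4⟩
    · intro x hx
      rcases x with a | z
      · by_cases hav : a = v'
        · rw [hav, deg_addK23_inl_eq]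
          by_cases hvr : v' = r
          · rw [hvr]; omega
          · have := ih1 v' hvr; omega
        · have har : a ≠ r := fun h => hx (by rw [h])
          rw [deg_addK23_inl_ne hav]
          exact ih1 a har
      · rcases z with i | m
        · rw [deg_addK23_I]; omega
        · by_cases hmt : m = t
          · rw [hmt, deg_addK23_R_eq]; omega
          · rw [deg_addK23_R_ne hmt]
    · intro x hadj
      rcases x with b | z
      · rw [addK23_adj_inl_inl] at hadj
        have hb3 := ih2 b hadj
        have hbv : b ≠ v' := fun h => by rw [h] at hb3; omega
        rw [deg_addK23_inl_ne hbv, hb3]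
      · rw [addK23_adj_inl_inr] at hadj
        obtain ⟨-, rfl⟩ := hadj
        rw [deg_addK23_R_eq]
    · by_cases hrv : r = v'
      · rw [hrv, deg_addK23_inl_eq]; omega
      · rw [deg_addK23_inl_ne hrv]; exact ih3
  | @iso V W G H r e hG ih =>
    obtain ⟨ih1, ih2, ih3, ih4, ih5, ih6, ih7⟩ := ih
    have hsy : ∀ x : W, e (e.symm x) = x := fun x => e.toEquiv.apply_symm_apply x
    have hsy' : ∀ x : V, e.symm (e x) = x := fun x => e.toEquiv.symm_apply_apply x
    have hdegW : ∀ x : W, deg H x = deg G (e.symm x) := by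
      intro x
      rw [← deg_congr e (e.symm x), hsy]
    refine ⟨?_, ?_, ?_, ?_, ?_, ?_, ?_⟩
    · intro x hx
      have hne : e.symm x ≠ r := fun h => hx (by rw [← hsy x, h])
      rw [hdegW]
      exact ih1 _ hne
    · intro x hadj
      have hadj' : G.Adj r (e.symm x) := by
        have : H.Adj (e r) (e (e.symm x)) := by rwa [hsy]
        exact e.map_adj_iff.1 this
      rw [hdegW]
      exact ih2 _ hadj'
    · rw [deg_congr e r]; exact ih3
    · obtain ⟨S, hS, hc, hr⟩ := ih4
      exact ⟨⇑e '' S, isIDSet_image e hS, by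
        rw [Set.ncard_image_of_injective _ (EquivLike.injective e), hc,
          iNum_congr e], ⟨r, hr, rfl⟩⟩
    · intro D h1 h2 h3 h4
      have hcard : (⇑e.symm '' D).ncard = D.ncard :=
        Set.ncard_image_of_injective _ (EquivLike.injective e.symm)
      have := ih5 (⇑e.symm '' D)
        (by
          rintro a ⟨x, hx, rfl⟩ b ⟨y, hy, rfl⟩ hadj
          exact h1 x hx y hy (e.symm.map_adj_iff.1 hadj))
        (by
          rintro ⟨x, hx, hxe⟩
          exact h2 ((show x = e r by rw [← hxe, hsy]) ▸ hx))
        (by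
          rintro x hadj ⟨y, hy, rfl⟩
          have : H.Adj (e r) y := by
            have : G.Adj (e.symm (e r)) (e.symm y) := by rwa [hsy']
            exact e.symm.map_adj_iff.1 this
          exact h3 y this hy)
        (by
          intro x hxr hx
          have hyr : e x ≠ e r := fun h => hxr (by
            have := congrArg (⇑e.symm) h
            rwa [hsy', hsy'] at this)
          have hyD : e x ∉ D := fun h => hx ⟨e x, h, hsy' x⟩
          obtain ⟨z, hz, hadj⟩ := h4 (e x) hyr hyD
          refine ⟨e.symm z, ⟨z, hz, rfl⟩, ?_⟩
          have : G.Adj (e.symm z) (e.symm (e x)) := e.symm.map_adj_iff.2 hadj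
          rwa [hsy'] at this)
      rw [← iNum_congr e]
      omega
    · intro D h1 h2 h3 h4 hp
      have hcard : (⇑e.symm '' D).ncard = D.ncard :=
        Set.ncard_image_of_injective _ (EquivLike.injective e.symm)
      obtain ⟨p, hpD, hpdeg⟩ := hp
      have := ih6 (⇑e.symm '' D)
        (by
          rintro a ⟨x, hx, rfl⟩ b ⟨y, hy, rfl⟩ hadj
          exact h1 x hx y hy (e.symm.map_adj_iff.1 hadj))
        (by
          rintro ⟨x, hx, hxe⟩
          exact h2 ((show x = e r by rw [← hxe, hsy]) ▸ hx))
        (by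
          rintro x hadj ⟨y, hy, rfl⟩
          have : H.Adj (e r) y := by
            have : G.Adj (e.symm (e r)) (e.symm y) := by rwa [hsy']
            exact e.symm.map_adj_iff.1 this
          exact h3 y this hy)
        (by
          intro x hxr hx
          have hyr : e x ≠ e r := fun h => hxr (by
            have := congrArg (⇑e.symm) h
            rwa [hsy', hsy'] at this)
          have hyD : e x ∉ D := fun h => hx ⟨e x, h, hsy' x⟩
          obtain ⟨z, hz, hadj⟩ := h4 (e x) hyr hyD
          refine ⟨e.symm z, ⟨z, hz, rfl⟩, ?_⟩
          have : G.Adj (e.symm z) (e.symm (e x)) := e.symm.map_adj_iff.2 hadj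
          rwa [hsy'] at this)
        ⟨e.symm p, ⟨p, hpD, rfl⟩, by rw [← hdegW]; exact hpdeg⟩
      rw [← iNum_congr e]
      omega
    · intro hdeg w2' hne hdeg2
      have h1 : deg G r = 1 := by rw [deg_congr e r] at hdeg; exact hdeg
      have hw : e.symm w2' ≠ r := fun h => hne (by rw [← hsy w2', h])
      have hdw : deg G (e.symm w2') = 2 := by rw [← hdegW]; exact hdeg2
      have hMG := ih7 h1 (e.symm w2') hw hdw
      have hiso := addLinkIso e r (e.symm w2')
      rw [show w2' = e (e.symm w2') from (hsy w2').symm]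
      rw [← iNum_congr hiso, hMG, iNum_congr e]


/-- Let `B ∈ 𝓑₁` have root `v₁` (of degree 1 in `B`), let `w₂ ≠ v₁`
be a vertex of degree 2 in `B`, and let `T` be obtained from `B` by adding a new vertex
`v₂` and the two edges `v₁v₂` and `v₂w₂`. Then `i(T) = i(B)`. -/
theorem statement14 {V : Type} (B : SimpleGraph V) (v1 : V) (hroot : FamilyBRoot B v1)
    (hdeg1 : deg B v1 = 1) (w2 : V) (hne : w2 ≠ v1) (hdeg2 : deg B w2 = 2)
    (T : SimpleGraph (V ⊕ Unit)) (hT : T = addLink B v1 w2) :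
    iNum T = iNum B := by
  subst hT
  exact (grand hroot).2.2.2.2.2.2 hdeg1 w2 hne hdeg2


end PaperIndepDom
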